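/- For the probability distribution p(0,0) = p(1,1) = 1/2 − α/(2π) and p(0,1) = p(1,0) = α/(2π) with α ∈ (0, π), the Shannon entropy H(α) = −2[(α/(2π))·log₂(α/(2π)) + (1/2 − α/(2π))·log₂(1/2 − α/(2π))] satisfies 1 ≤ H(α) ≤ 2, with H(α) = 2 if and only if α = π/2. -/

import Mathlib

open Real

/-- Shannon entropy (base 2) of the message distribution at angle `α`. -/
noncomputable def H (α : ℝ) : ℝ :=
  -2 * ((α/(2*π)) * logb 2 (α/(2*π)) + (1/2 - α/(2*π)) * logb 2 (1/2 - α/(2*π)))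

theorem entropy_bounds (α : ℝ) (hα : α ∈ Set.Ioo 0 π) :
    (1 ≤ H α ∧ H α ≤ 2) ∧ (H α = 2 ↔ α = π/2) := by
  obtain ⟨h0, hπ⟩ := hα
  have hπ0 : (0:ℝ) < π := Real.pi_pos
  set x := α / (2*π) with hxdef
  have hx0 : 0 < x := by positivity
  have hx2 : x < 1/2 := by
    rw [hxdef, div_lt_iff₀ (by positivity)]; linarith
  set y := 1/2 - x with hydef
  have hy0 : 0 < y := by rw [hydef]; linarith
  have hy2 : y < 1/2 := by rw [hydef]; linarith
  have hxy : x + y = 1/2 := by rw [hydef]; ring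
  set L := Real.log 2 with hLdef
  have hL : 0 < L := Real.log_pos (by norm_num)
  set S := x * Real.log x + y * Real.log y with hSdef
  have hH : H α = -2 * S / L := by
    have h1 : H α = -2 * (x * (Real.log x / L) + y * (Real.log y / L)) := rfl
    rw [h1, hSdef]
    field_simp
  clear_value x y L S
  -- lower bound on S side: S < -L/2
  have hS1 : S < -L/2 := by
    have hl : Real.log (1/2) = -L := by
      rw [hLdef]; simp [Real.log_div]
    have e1 : x * Real.log x < x * (-L) := by
      rw [← hl]; exact mul_lt_mul_of_pos_left (Real.log_lt_log hx0 hx2) hx0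
    have e2 : y * Real.log y < y * (-L) := by
      rw [← hl]; exact mul_lt_mul_of_pos_left (Real.log_lt_log hy0 hy2) hy0
    have hsum : x*(-L) + y*(-L) = -L/2 := by linear_combination (-L) * hxy
    rw [hSdef]; linarith
  -- key pointwise bound via log t ≤ t - 1
  have key : ∀ t : ℝ, 0 < t → t * Real.log t ≥ t - 1/4 - 2*L*t := by
    intro t ht
    have hle := Real.log_le_sub_one_of_pos (x := 1/(4*t)) (by positivity)
    have hlog : Real.log (1/(4*t)) = -(Real.log 4 + Real.log t) := by
      rw [one_div, Real.log_inv, Real.log_mul (by norm_num) (ne_of_gt ht)]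
    have h4L : Real.log 4 = 2*L := by
      rw [hLdef, show (4:ℝ) = 2^2 by norm_num, Real.log_pow]; push_cast; ring
    rw [hlog, h4L] at hle
    have ht' : Real.log t ≥ 1 - 1/(4*t) - 2*L := by linarith
    calc t * Real.log t ≥ t * (1 - 1/(4*t) - 2*L) :=
          mul_le_mul_of_nonneg_left ht' (le_of_lt ht)
      _ = t - 1/4 - 2*L*t := by field_simp
  have keystrict : ∀ t : ℝ, 0 < t → t ≠ 1/4 → t * Real.log t > t - 1/4 - 2*L*t := by
    intro t ht htne
    have h4t : (1:ℝ)/(4*t) ≠ 1 := by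
      intro h
      apply htne
      field_simp at h
      linarith
    have hlt := Real.log_lt_sub_one_of_pos (x := 1/(4*t)) (by positivity) h4t
    have hlog : Real.log (1/(4*t)) = -(Real.log 4 + Real.log t) := by
      rw [one_div, Real.log_inv, Real.log_mul (by norm_num) (ne_of_gt ht)]
    have h4L : Real.log 4 = 2*L := by
      rw [hLdef, show (4:ℝ) = 2^2 by norm_num, Real.log_pow]; push_cast; ring
    rw [hlog, h4L] at hlt
    have ht' : Real.log t > 1 - 1/(4*t) - 2*L := by linarith
    calc t * Real.log t > t * (1 - 1/(4*t) - 2*L) :=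
          mul_lt_mul_of_pos_left ht' ht
      _ = t - 1/4 - 2*L*t := by field_simp
  have hLsum : 2*L*x + 2*L*y = L := by linear_combination (2*L) * hxy
  have hS2 : S ≥ -L := by
    have h1 := key x hx0
    have h2 := key y hy0
    rw [hSdef]; linarith
  have hS2' : x ≠ 1/4 → S > -L := by
    intro hne
    have h1 := keystrict x hx0 hne
    have h2 := key y hy0
    rw [hSdef]; linarith
  have hSeq : x = 1/4 → S = -L := by
    intro hx
    have hy : y = 1/4 := by rw [hydef, hx]; norm_num
    rw [hSdef, hx, hy]
    have hl : Real.log ((1:ℝ)/4) = -(2*L) := by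
      rw [hLdef, show (1:ℝ)/4 = (2^2)⁻¹ by norm_num, Real.log_inv, Real.log_pow]
      push_cast; ring
    rw [hl]; ring
  have hxiff : x = 1/4 ↔ α = π/2 := by
    rw [hxdef, div_eq_iff (by positivity : (2*π) ≠ 0)]
    constructor <;> intro h <;> linarith
  constructor
  · constructor
    · rw [hH, le_div_iff₀ hL]; linarith
    · rw [hH, div_le_iff₀ hL]; linarith
  · rw [hH, ← hxiff]
    constructor
    · intro h
      by_contra hne
      have := hS2' hne
      rw [div_eq_iff (ne_of_gt hL)] at h
      linarith
    · intro h
      rw [hSeq h]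
      field_simp
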